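/- arXiv:1204.4770 — 7 statements merged into one kernel-verified Lean document; each statement's English description precedes it below -/
import Mathlib

section
/- The function t ↦ (1 - exp(t))² / (1 + exp(2t)) is monotonically increasing on [0, ∞). -/
/-- The function `t ↦ (1 - exp t)^2 / (1 + exp (2t))` is monotonically increasing on `[0, ∞)`. -/
theorem stmt0 :
    MonotoneOn (fun t : ℝ => (1 - Real.exp t) ^ 2 / (1 + Real.exp (2 * t))) (Set.Ici 0) := by
  intro a ha b hb hab
  simp only
  have hx : 1 ≤ Real.exp a := Real.one_le_exp ha
  have hy : 1 ≤ Real.exp b := Real.one_le_exp hb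
  have hxy : Real.exp a ≤ Real.exp b := Real.exp_le_exp.2 hab
  rw [show (2:ℝ) * a = a + a by ring, show (2:ℝ) * b = b + b by ring,
    Real.exp_add, Real.exp_add, div_le_div_iff₀ (by positivity) (by positivity)]
  nlinarith [mul_nonneg (sub_nonneg.2 hxy)
    (sub_nonneg.2 (one_le_mul_of_one_le_of_one_le hx hx)),
    mul_nonneg (sub_nonneg.2 hxy) (sub_nonneg.2 hx)]
end

section
/- For all t ≥ 0, (1 - exp(t))² / (1 + exp(2t)) ≤ t²/2. -/
private lemma key_deriv (x : ℝ) :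
    HasDerivAt (fun x : ℝ => x * (Real.exp x + 1) - 2 * (Real.exp x - 1))
      (1 + (x - 1) * Real.exp x) x := by
  have h1 : HasDerivAt (fun x : ℝ => x * (Real.exp x + 1))
      (1 * (Real.exp x + 1) + x * Real.exp x) x :=
    (hasDerivAt_id x).mul ((Real.hasDerivAt_exp x).add_const 1)
  have h2 : HasDerivAt (fun x : ℝ => 2 * (Real.exp x - 1)) (2 * Real.exp x) x := by
    simpa using ((Real.hasDerivAt_exp x).sub_const 1).const_mul 2
  exact (h1.sub h2).congr_deriv (by ring)

private lemma key (t : ℝ) (ht : 0 ≤ t) :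
    2 * (Real.exp t - 1) ≤ t * (Real.exp t + 1) := by
  set f : ℝ → ℝ := fun x => x * (Real.exp x + 1) - 2 * (Real.exp x - 1) with hf
  have hderiv : ∀ x : ℝ, deriv f x = 1 + (x - 1) * Real.exp x := fun x => (key_deriv x).deriv
  have hmono : MonotoneOn f (Set.Ici 0) := by
    apply monotoneOn_of_deriv_nonneg (convex_Ici 0)
    · exact Continuous.continuousOn (by fun_prop)
    · exact fun x _ => (key_deriv x).differentiableAt.differentiableWithinAt
    · intro x hx
      rw [hderiv]
      have h1 : 1 - x ≤ Real.exp (-x) := by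
        have := Real.add_one_le_exp (-x); linarith
      have h2 : (1 - x) * Real.exp x ≤ Real.exp (-x) * Real.exp x :=
        mul_le_mul_of_nonneg_right h1 (Real.exp_pos x).le
      rw [← Real.exp_add] at h2
      simp at h2
      nlinarith
  have h0 : f 0 = 0 := by simp [hf]
  have := hmono (Set.self_mem_Ici) (Set.mem_Ici.mpr ht) ht
  rw [h0] at this
  simp only [hf] at this
  linarith

/-- For all `t ≥ 0`, `(1 - exp t)^2 / (1 + exp (2t)) ≤ t^2 / 2`. -/
theorem stmt1 (t : ℝ) (ht : 0 ≤ t) :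
    (1 - Real.exp t) ^ 2 / (1 + Real.exp (2 * t)) ≤ t ^ 2 / 2 := by
  have hk := key t ht
  have hexp : Real.exp (2 * t) = Real.exp t ^ 2 := by
    rw [two_mul, Real.exp_add, sq]
  have hpos : (0 : ℝ) < 1 + Real.exp (2 * t) := by positivity
  rw [div_le_div_iff₀ hpos (by norm_num)]
  have hsq : (2 * (Real.exp t - 1)) ^ 2 ≤ (t * (Real.exp t + 1)) ^ 2 := by
    apply sq_le_sq'
    · nlinarith [Real.exp_pos t, Real.add_one_le_exp t]
    · exact hk
  have hamgm : 2 * Real.exp t ≤ 1 + Real.exp t ^ 2 := by nlinarith [sq_nonneg (Real.exp t - 1)]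
  nlinarith [sq_nonneg t, Real.exp_pos t]
end

section
/- Let α > 0 and a ≤ b be real numbers with b - a ≤ c for some c ≥ 0. Then (exp(αb) - exp(αa))² ≤ ((1 - exp(αc))²/(1 + exp(2αc))) · (exp(2αa) + exp(2αb)). -/
/-- Key pointwise inequality for exponentials: if `α > 0`, `a ≤ b`, `0 ≤ c` and `b - a ≤ c`,
then `(exp (αb) - exp (αa))^2 ≤ ((1 - exp (αc))^2 / (1 + exp (2αc))) * (exp (2αa) + exp (2αb))`. -/
theorem stmt2 (α a b c : ℝ) (hα : 0 < α) (hab : a ≤ b) (hc : 0 ≤ c) (hbac : b - a ≤ c) :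
    (Real.exp (α * b) - Real.exp (α * a)) ^ 2 ≤
      ((1 - Real.exp (α * c)) ^ 2 / (1 + Real.exp (2 * α * c))) *
        (Real.exp (2 * α * a) + Real.exp (2 * α * b)) := by
  set x := Real.exp (α * a) with hxdef
  set y := Real.exp (α * b) with hydef
  set t := Real.exp (α * c) with htdef
  have hx : 0 < x := Real.exp_pos _
  have hy : 0 < y := Real.exp_pos _
  have h2a : Real.exp (2 * α * a) = x ^ 2 := by
    rw [hxdef, ← Real.exp_nat_mul]; ring_nf
  have h2b : Real.exp (2 * α * b) = y ^ 2 := by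
    rw [hydef, ← Real.exp_nat_mul]; ring_nf
  have h2c : Real.exp (2 * α * c) = t ^ 2 := by
    rw [htdef, ← Real.exp_nat_mul]; ring_nf
  have hxy : x ≤ y := Real.exp_le_exp.mpr (by nlinarith)
  have ht : 1 ≤ t := Real.one_le_exp (by positivity)
  have hyt : y ≤ t * x := by
    rw [hydef, htdef, hxdef, ← Real.exp_add]
    exact Real.exp_le_exp.mpr (by nlinarith)
  rw [h2a, h2b, h2c, div_mul_eq_mul_div, le_div_iff₀ (by positivity)]
  nlinarith [mul_nonneg (sub_nonneg.2 hyt) (by nlinarith : (0:ℝ) ≤ t * y - x)]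
end

section
/- Let a ≤ j ≤ b be real numbers and α > 0. Define h(t) = αt for t ≤ j and h(t) = 2αj - αt for t > j (tent function), and f = exp ∘ h. Then (f(b) - f(a))² ≤ ((1 - exp(α(b-a)))²/(1 + exp(2α(b-a)))) · (f(a)² + f(b)²). -/
/-- Core tent-function estimate: for `a ≤ j ≤ b` and `α > 0`, with `h` the tent function
peaking at `j` with slope `α` and `f = exp ∘ h`,
`(f b - f a)^2 ≤ ((1 - exp (α (b - a)))^2 / (1 + exp (2 α (b - a)))) * (f a ^ 2 + f b ^ 2)`. -/
theorem stmt3 (α a j b : ℝ) (hα : 0 < α) (haj : a ≤ j) (hjb : j ≤ b) :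
    let h : ℝ → ℝ := fun t => if t ≤ j then α * t else 2 * α * j - α * t
    let f : ℝ → ℝ := fun t => Real.exp (h t)
    (f b - f a) ^ 2 ≤
      ((1 - Real.exp (α * (b - a))) ^ 2 / (1 + Real.exp (2 * α * (b - a)))) *
        (f a ^ 2 + f b ^ 2) := by
  intro h f
  have hfa : f a = Real.exp (α * a) := by simp [f, h, haj]
  have hfb : f b = Real.exp (2 * α * j - α * b) := by
    by_cases hb : b ≤ j
    · have hbj : b = j := le_antisymm hb hjb
      subst hbj
      simp only [f, h, le_refl, if_true]
      ring_nf
    · simp [f, h, hb]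
  have hE2 : Real.exp (2 * α * (b - a)) = Real.exp (α * (b - a)) ^ 2 := by
    rw [sq, ← Real.exp_add]; ring_nf
  have h1 : Real.exp (2 * α * j - α * b) ≤ Real.exp (α * (b - a)) * Real.exp (α * a) := by
    rw [← Real.exp_add]
    exact Real.exp_le_exp.mpr (by nlinarith)
  have h2 : Real.exp (α * a) ≤ Real.exp (α * (b - a)) * Real.exp (2 * α * j - α * b) := by
    rw [← Real.exp_add]
    exact Real.exp_le_exp.mpr (by nlinarith)
  have hupos : (0:ℝ) < Real.exp (α * a) := Real.exp_pos _
  have hvpos : (0:ℝ) < Real.exp (2 * α * j - α * b) := Real.exp_pos _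
  have hEpos : (0:ℝ) < Real.exp (α * (b - a)) := Real.exp_pos _
  rw [hfa, hfb, hE2, div_mul_eq_mul_div, le_div_iff₀ (by positivity)]
  nlinarith [mul_nonneg (sub_nonneg.mpr h1) (sub_nonneg.mpr h2)]
end

section
/- Let Γ be a countable weighted graph with symmetric edge weights π : G × G → ℝ≥0 and vertex weights θ : G → (0,∞), and let ρ be a metric on G adapted to (π,θ), i.e. (1/θ(x))·Σ_y π(x,y)·ρ(x,y)² ≤ 1 for all x. If f : G → ℝ satisfies (f(y) - f(x))² ≤ C·ρ(x,y)²·(f(x)² + f(y)²) whenever π(x,y) > 0, then the Dirichlet form E(f,f) = (1/2)·Σ_{x,y} π(x,y)·(f(y) - f(x))² satisfies E(f,f) ≤ C·Σ_x f(x)²·θ(x). -/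
open scoped ENNReal

/-- Lemma 2.5: if `ρ` is adapted to `(π, θ)` and
`(f y - f x)^2 ≤ C ρ(x,y)^2 (f x ^ 2 + f y ^ 2)` on edges, then the Dirichlet form of `f`
is bounded by `C` times its `L²(θ)` norm.  Sums are interpreted in `[0, ∞]`. -/
theorem stmt5 {G : Type*} [Countable G] (π : G → G → ℝ) (θ : G → ℝ) (ρ : G → G → ℝ)
    (hπ : ∀ x y, 0 ≤ π x y) (hπsymm : ∀ x y, π x y = π y x) (hθ : ∀ x, 0 < θ x)
    (hρ : ∀ x y, 0 ≤ ρ x y)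
    (hadapted : ∀ x, (∑' y : G, ENNReal.ofReal (π x y * ρ x y ^ 2)) ≤ ENNReal.ofReal (θ x))
    (C : ℝ) (hC : 0 ≤ C) (f : G → ℝ)
    (hf : ∀ x y, 0 < π x y → (f y - f x) ^ 2 ≤ C * ρ x y ^ 2 * (f x ^ 2 + f y ^ 2)) :
    (1 / 2 : ℝ≥0∞) * ∑' x : G, ∑' y : G, ENNReal.ofReal (π x y * (f y - f x) ^ 2) ≤
      ENNReal.ofReal C * ∑' x : G, ENNReal.ofReal (f x ^ 2 * θ x) := by
  -- pointwise bound
  have key : ∀ x y, ENNReal.ofReal (π x y * (f y - f x) ^ 2)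
      ≤ ENNReal.ofReal ((C * f x ^ 2) * (π x y * ρ x y ^ 2))
        + ENNReal.ofReal ((C * f y ^ 2) * (π x y * ρ y x ^ 2)) := by
    intro x y
    rcases eq_or_lt_of_le (hπ x y) with h | h
    · simp [← h]
    · rw [← ENNReal.ofReal_add (by positivity) (by positivity)]
      apply ENNReal.ofReal_le_ofReal
      rcases le_total (ρ x y) (ρ y x) with hle | hle
      · have h1 := hf x y h
        have h2 : ρ x y ^ 2 ≤ ρ y x ^ 2 := by
          have := hρ x y; nlinarith
        nlinarith [sq_nonneg (f x), sq_nonneg (f y), sq_nonneg (ρ x y),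
          mul_le_mul_of_nonneg_left h1 h.le,
          mul_nonneg (mul_nonneg hC (sq_nonneg (f y))) h.le]
      · have h1 := hf y x (by rw [hπsymm]; exact h)
        have h1' : (f y - f x) ^ 2 ≤ C * ρ y x ^ 2 * (f x ^ 2 + f y ^ 2) := by
          nlinarith [h1]
        have h2 : ρ y x ^ 2 ≤ ρ x y ^ 2 := by
          have := hρ y x; nlinarith
        nlinarith [sq_nonneg (f x), sq_nonneg (f y), sq_nonneg (ρ y x),
          mul_le_mul_of_nonneg_left h1' h.le,
          mul_nonneg (mul_nonneg hC (sq_nonneg (f x))) h.le]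
  set T : ℝ≥0∞ := ∑' x : G, ∑' y : G, ENNReal.ofReal ((C * f x ^ 2) * (π x y * ρ x y ^ 2))
    with hTdef
  have hswap : (∑' x : G, ∑' y : G,
      ENNReal.ofReal ((C * f y ^ 2) * (π x y * ρ y x ^ 2))) = T := by
    rw [ENNReal.tsum_comm]
    exact tsum_congr fun x => tsum_congr fun y => by rw [hπsymm]
  have hstep1 : (∑' x : G, ∑' y : G, ENNReal.ofReal (π x y * (f y - f x) ^ 2)) ≤ T + T := by
    calc (∑' x : G, ∑' y : G, ENNReal.ofReal (π x y * (f y - f x) ^ 2))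
        ≤ ∑' x : G, ∑' y : G, (ENNReal.ofReal ((C * f x ^ 2) * (π x y * ρ x y ^ 2))
            + ENNReal.ofReal ((C * f y ^ 2) * (π x y * ρ y x ^ 2))) := by
          exact ENNReal.tsum_le_tsum fun x => ENNReal.tsum_le_tsum fun y => key x y
      _ = (∑' x : G, ∑' y : G, ENNReal.ofReal ((C * f x ^ 2) * (π x y * ρ x y ^ 2)))
            + ∑' x : G, ∑' y : G, ENNReal.ofReal ((C * f y ^ 2) * (π x y * ρ y x ^ 2)) := by
          rw [← ENNReal.tsum_add]
          exact tsum_congr fun x => ENNReal.tsum_add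
      _ = T + T := by rw [hswap, ← hTdef]
  have hT : T ≤ ENNReal.ofReal C * ∑' x : G, ENNReal.ofReal (f x ^ 2 * θ x) := by
    rw [← ENNReal.tsum_mul_left]
    apply ENNReal.tsum_le_tsum
    intro x
    have hfac : ∀ y : G, ENNReal.ofReal ((C * f x ^ 2) * (π x y * ρ x y ^ 2))
        = ENNReal.ofReal (C * f x ^ 2) * ENNReal.ofReal (π x y * ρ x y ^ 2) := fun y =>
      ENNReal.ofReal_mul (by positivity)
    calc (∑' y : G, ENNReal.ofReal ((C * f x ^ 2) * (π x y * ρ x y ^ 2)))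
        = ENNReal.ofReal (C * f x ^ 2) * ∑' y : G, ENNReal.ofReal (π x y * ρ x y ^ 2) := by
          rw [tsum_congr hfac, ENNReal.tsum_mul_left]
      _ ≤ ENNReal.ofReal (C * f x ^ 2) * ENNReal.ofReal (θ x) := by
          gcongr; exact hadapted x
      _ = ENNReal.ofReal C * ENNReal.ofReal (f x ^ 2 * θ x) := by
          rw [← ENNReal.ofReal_mul (by positivity), ← ENNReal.ofReal_mul hC, mul_assoc]
  calc (1 / 2 : ℝ≥0∞) * ∑' x : G, ∑' y : G, ENNReal.ofReal (π x y * (f y - f x) ^ 2)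
      ≤ (1 / 2 : ℝ≥0∞) * (T + T) := by gcongr
    _ = T := by
        rw [one_div, ← two_mul, ← mul_assoc,
          ENNReal.inv_mul_cancel two_ne_zero (by norm_num), one_mul]
    _ ≤ ENNReal.ofReal C * ∑' x : G, ENNReal.ofReal (f x ^ 2 * θ x) := hT
end

section
/- On ℤ≥0 with edge weights π(n, n+1) = (n+1)², for every finitely supported f : ℤ≥0 → ℝ one has Σ_{n≥0} (n+1)²·(f(n) - f(n+1))² ≥ (1/9)·Σ_{n≥0} f(n)². -/
/-- Hardy-type inequality: on `ℤ≥0` with edge weights `π(n, n+1) = (n+1)²`, every finitely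
supported `f` satisfies `Σ (n+1)² (f n - f (n+1))² ≥ (1/9) Σ f n ²`. -/
theorem stmt8 (f : ℕ → ℝ) (hf : (Function.support f).Finite) :
    (∑' n : ℕ, ((n : ℝ) + 1) ^ 2 * (f n - f (n + 1)) ^ 2) ≥
      (1 / 9 : ℝ) * ∑' n : ℕ, f n ^ 2 := by
  obtain ⟨N, hN⟩ : ∃ N, ∀ n ≥ N, f n = 0 := by
    obtain ⟨M, hM⟩ := hf.bddAbove
    refine ⟨M + 1, fun n hn => ?_⟩
    by_contra h
    exact absurd (hM (Function.mem_support.2 h)) (by omega)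
  have h1 : (∑' n : ℕ, ((n : ℝ) + 1) ^ 2 * (f n - f (n + 1)) ^ 2)
      = ∑ n ∈ Finset.range N, ((n : ℝ) + 1) ^ 2 * (f n - f (n + 1)) ^ 2 := by
    apply tsum_eq_sum
    intro n hn
    rw [Finset.mem_range, not_lt] at hn
    rw [hN n hn, hN (n + 1) (by omega)]
    ring
  have h2 : (∑' n : ℕ, f n ^ 2) = ∑ n ∈ Finset.range N, f n ^ 2 := by
    apply tsum_eq_sum
    intro n hn
    rw [Finset.mem_range, not_lt] at hn
    rw [hN n hn]
    ring
  rw [h1, h2, ge_iff_le, Finset.mul_sum]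
  have key : ∀ n : ℕ,
      ((n : ℝ) + 1) ^ 2 / (2 * n + 3) * f n ^ 2 - ((n : ℝ) + 1) / 2 * f (n + 1) ^ 2
        ≤ ((n : ℝ) + 1) ^ 2 * (f n - f (n + 1)) ^ 2 := by
    intro n
    have hn : (0 : ℝ) ≤ n := Nat.cast_nonneg n
    have h3 : (0 : ℝ) < 2 * n + 3 := by linarith
    rw [sub_le_iff_le_add, div_mul_eq_mul_div, div_le_iff₀ h3]
    nlinarith [sq_nonneg ((2 * (n : ℝ) + 2) * f n - (2 * (n : ℝ) + 3) * f (n + 1)),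
      mul_nonneg hn (sq_nonneg ((2 * (n : ℝ) + 2) * f n - (2 * (n : ℝ) + 3) * f (n + 1))),
      sq_nonneg (f (n + 1))]
  have shift : ∑ n ∈ Finset.range N, ((n : ℝ) / 2 * f n ^ 2)
      = ∑ n ∈ Finset.range N, (((n : ℝ) + 1) / 2 * f (n + 1) ^ 2) := by
    have e1 := Finset.sum_range_succ (fun n : ℕ => (n : ℝ) / 2 * f n ^ 2) N
    have e2 := Finset.sum_range_succ' (fun n : ℕ => (n : ℝ) / 2 * f n ^ 2) N
    simp only [hN N le_rfl] at e1
    push_cast at e1 e2 ⊢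
    rw [e2] at e1
    simpa using e1.symm
  calc ∑ n ∈ Finset.range N, 1 / 9 * f n ^ 2
      ≤ ∑ n ∈ Finset.range N,
          (((n : ℝ) + 1) ^ 2 / (2 * n + 3) * f n ^ 2 - (n : ℝ) / 2 * f n ^ 2) := by
        apply Finset.sum_le_sum
        intro n _
        have hn : (0 : ℝ) ≤ n := Nat.cast_nonneg n
        have h3 : (0 : ℝ) < 2 * n + 3 := by linarith
        have h4 : (1 / 9 : ℝ) + n / 2 ≤ ((n : ℝ) + 1) ^ 2 / (2 * n + 3) := by
          rw [le_div_iff₀ h3]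
          nlinarith
        nlinarith [mul_nonneg (by linarith : (0:ℝ) ≤ ((n : ℝ) + 1) ^ 2 / (2 * n + 3) - n / 2 - 1 / 9) (sq_nonneg (f n))]
    _ = ∑ n ∈ Finset.range N,
          (((n : ℝ) + 1) ^ 2 / (2 * n + 3) * f n ^ 2 - ((n : ℝ) + 1) / 2 * f (n + 1) ^ 2) := by
        rw [Finset.sum_sub_distrib, Finset.sum_sub_distrib, shift]
    _ ≤ ∑ n ∈ Finset.range N, ((n : ℝ) + 1) ^ 2 * (f n - f (n + 1)) ^ 2 :=
        Finset.sum_le_sum fun n _ => key n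
end

section
/- On ℤ≥0 with nearest-neighbor edge weights π_α(n,n+1) = (n+1)²·log_+^α(n+1), where log_+(x)=max(log x,1), for every α with 0 < α < 2 and every k ≥ 0, every finitely supported f : ℤ≥0 → ℝ vanishing on {0,...,k} satisfies Σ_n π_α(n,n+1)(f(n)-f(n+1))² ≥ (log_+^α(k+1)/9)·Σ_n f(n)². -/
private lemma edge_ineq (w r x y : ℝ) (hw : 0 ≤ w) (hr : 0 < r) :
    w * (1 - r) * x ^ 2 + w * (1 - 1 / r) * y ^ 2 ≤ w * (x - y) ^ 2 := by
  have key : w * (x - y) ^ 2 - (w * (1 - r) * x ^ 2 + w * (1 - 1 / r) * y ^ 2)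
      = (w / r) * (r * x - y) ^ 2 := by
    field_simp
    ring
  nlinarith [mul_nonneg (div_nonneg hw hr.le) (sq_nonneg (r * x - y))]

private noncomputable def auxA (α : ℝ) (n : ℕ) : ℝ :=
  ((n : ℝ) + 1) ^ 2 * (max (Real.log ((n : ℝ) + 1)) 1) ^ α / (2 * (n : ℝ) + 4)

private noncomputable def auxD (α : ℝ) (m : ℕ) : ℝ :=
  -((m : ℝ) ^ 2 * (max (Real.log ((m : ℝ))) 1) ^ α / (2 * (m : ℝ) + 1))

/-- Dirichlet eigenvalue lower bound on the birth-death chain with weights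
`π_α(n, n+1) = (n+1)² log_+^α (n+1)`: every finitely supported `f` vanishing on
`{0, …, k}` satisfies
`Σ_n π_α(n,n+1) (f n - f (n+1))² ≥ (log_+^α (k+1) / 9) Σ_n f n ²`. -/
theorem stmt18 (α : ℝ) (hα0 : 0 < α) (hα2 : α < 2) (k : ℕ)
    (f : ℕ → ℝ) (hfin : (Function.support f).Finite) (hvan : ∀ n ≤ k, f n = 0) :
    (∑' n : ℕ, ((n : ℝ) + 1) ^ 2 * (max (Real.log ((n : ℝ) + 1)) 1) ^ α *
        (f n - f (n + 1)) ^ 2) ≥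
      ((max (Real.log ((k : ℝ) + 1)) 1) ^ α / 9) * ∑' n : ℕ, f n ^ 2 := by
  obtain ⟨M, hM⟩ := hfin.bddAbove
  set N := M + 1 with hNdef
  have hf0 : ∀ n, N ≤ n → f n = 0 := by
    intro n hn
    by_contra h
    have := hM (Function.mem_support.2 h)
    omega
  -- convert tsums to finite sums
  have key1 : (∑' n : ℕ, ((n : ℝ) + 1) ^ 2 * (max (Real.log ((n : ℝ) + 1)) 1) ^ α *
      (f n - f (n + 1)) ^ 2)
      = ∑ n ∈ Finset.range N, ((n : ℝ) + 1) ^ 2 * (max (Real.log ((n : ℝ) + 1)) 1) ^ α *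
        (f n - f (n + 1)) ^ 2 := by
    refine tsum_eq_sum ?_
    intro n hn
    rw [Finset.mem_range, not_lt] at hn
    rw [hf0 n hn, hf0 (n + 1) (by omega)]
    ring
  have key2 : (∑' n : ℕ, f n ^ 2) = ∑ n ∈ Finset.range N, f n ^ 2 := by
    refine tsum_eq_sum ?_
    intro n hn
    rw [Finset.mem_range, not_lt] at hn
    rw [hf0 n hn]
    ring
  rw [key1, key2, ge_iff_le]
  -- edge inequality
  have hedge : ∀ n : ℕ, auxA α n * f n ^ 2 + auxD α (n + 1) * f (n + 1) ^ 2
      ≤ ((n : ℝ) + 1) ^ 2 * (max (Real.log ((n : ℝ) + 1)) 1) ^ α * (f n - f (n + 1)) ^ 2 := by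
    intro n
    have hb1 : (0 : ℝ) < max (Real.log ((n : ℝ) + 1)) 1 :=
      lt_of_lt_of_le one_pos (le_max_right _ _)
    have hc : (0 : ℝ) ≤ ((n : ℝ) + 1) ^ 2 * (max (Real.log ((n : ℝ) + 1)) 1) ^ α := by
      have := Real.rpow_pos_of_pos hb1 α
      positivity
    have hr : (0 : ℝ) < (2 * (n : ℝ) + 3) / (2 * (n : ℝ) + 4) := by positivity
    have h := edge_ineq _ _ (f n) (f (n + 1)) hc hr
    have e1 : ((n : ℝ) + 1) ^ 2 * (max (Real.log ((n : ℝ) + 1)) 1) ^ α *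
        (1 - (2 * (n : ℝ) + 3) / (2 * (n : ℝ) + 4)) = auxA α n := by
      simp only [auxA]
      have h4 : (2 * (n : ℝ) + 4) ≠ 0 := by positivity
      field_simp
      ring
    have e2 : ((n : ℝ) + 1) ^ 2 * (max (Real.log ((n : ℝ) + 1)) 1) ^ α *
        (1 - 1 / ((2 * (n : ℝ) + 3) / (2 * (n : ℝ) + 4))) = auxD α (n + 1) := by
      simp only [auxD]
      push_cast
      have h3 : (2 * (n : ℝ) + 3) ≠ 0 := by positivity
      have h4 : (2 * (n : ℝ) + 4) ≠ 0 := by positivity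
      field_simp
      ring
    rw [e1, e2] at h
    exact h
  -- coefficient lower bound
  have hcoef : ∀ n : ℕ, k + 1 ≤ n →
      (max (Real.log ((k : ℝ) + 1)) 1) ^ α / 9 ≤ auxA α n + auxD α n := by
    intro n hn
    have hn1 : (1 : ℝ) ≤ (n : ℝ) := by exact_mod_cast Nat.one_le_iff_ne_zero.2 (by omega)
    have hkn : (k : ℝ) + 1 ≤ (n : ℝ) := by exact_mod_cast hn
    have hbk : (0 : ℝ) < max (Real.log ((k : ℝ) + 1)) 1 :=
      lt_of_lt_of_le one_pos (le_max_right _ _)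
    have hbn : (0 : ℝ) < max (Real.log ((n : ℝ))) 1 :=
      lt_of_lt_of_le one_pos (le_max_right _ _)
    have hlog1 : max (Real.log ((k : ℝ) + 1)) 1 ≤ max (Real.log ((n : ℝ))) 1 := by
      apply max_le_max _ le_rfl
      exact Real.log_le_log (by positivity) hkn
    have hlog2 : max (Real.log ((n : ℝ))) 1 ≤ max (Real.log ((n : ℝ) + 1)) 1 := by
      apply max_le_max _ le_rfl
      exact Real.log_le_log (by linarith) (by linarith)
    set z := (max (Real.log ((k : ℝ) + 1)) 1) ^ α with hz
    set x := (max (Real.log ((n : ℝ))) 1) ^ α with hx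
    set y := (max (Real.log ((n : ℝ) + 1)) 1) ^ α with hy
    have h1 : z ≤ x := Real.rpow_le_rpow hbk.le hlog1 hα0.le
    have h2 : x ≤ y := Real.rpow_le_rpow hbn.le hlog2 hα0.le
    have hz0 : 0 < z := Real.rpow_pos_of_pos hbk α
    have eAD : auxA α n + auxD α n =
        (((n : ℝ) + 1) ^ 2 * y * (2 * (n : ℝ) + 1) - (n : ℝ) ^ 2 * x * (2 * (n : ℝ) + 4)) /
          ((2 * (n : ℝ) + 4) * (2 * (n : ℝ) + 1)) := by
      simp only [auxA, auxD, ← hx, ← hy]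
      have h3 : (2 * (n : ℝ) + 1) ≠ 0 := by positivity
      have h4 : (2 * (n : ℝ) + 4) ≠ 0 := by positivity
      field_simp
      ring
    rw [eAD, div_le_div_iff₀ (by norm_num) (by positivity)]
    have h2' : 9 * (((n : ℝ) + 1) ^ 2 * (2 * (n : ℝ) + 1)) * x
        ≤ 9 * (((n : ℝ) + 1) ^ 2 * (2 * (n : ℝ) + 1)) * y := by
      apply mul_le_mul_of_nonneg_left h2
      positivity
    have h1' : ((n : ℝ) ^ 2 + 4 * n + 1) * z ≤ ((n : ℝ) ^ 2 + 4 * n + 1) * x := by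
      apply mul_le_mul_of_nonneg_left h1
      positivity
    have h5 : 0 ≤ (5 * (n : ℝ) ^ 2 + 26 * n + 5) * z := by positivity
    nlinarith [h2', h1', h5]
  -- rearrangement of the sum
  have hre : ∑ n ∈ Finset.range N, (auxA α n * f n ^ 2 + auxD α (n + 1) * f (n + 1) ^ 2)
      = ∑ n ∈ Finset.range N, (auxA α n + auxD α n) * f n ^ 2 := by
    rw [Finset.sum_add_distrib]
    have hs1 := Finset.sum_range_succ' (fun m => auxD α m * f m ^ 2) N
    have hs2 := Finset.sum_range_succ (fun m => auxD α m * f m ^ 2) N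
    have hN0 : auxD α N * f N ^ 2 = 0 := by rw [hf0 N le_rfl]; ring
    have h00 : auxD α 0 * f 0 ^ 2 = 0 := by rw [hvan 0 (Nat.zero_le k)]; ring
    have h1 : ∑ n ∈ Finset.range N, auxD α (n + 1) * f (n + 1) ^ 2
        = ∑ n ∈ Finset.range N, auxD α n * f n ^ 2 := by
      rw [hs2] at hs1
      rw [hN0, h00] at hs1
      linarith
    rw [h1, ← Finset.sum_add_distrib]
    exact Finset.sum_congr rfl fun n _ => by ring
  -- assemble
  calc (max (Real.log ((k : ℝ) + 1)) 1) ^ α / 9 * ∑ n ∈ Finset.range N, f n ^ 2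
      = ∑ n ∈ Finset.range N, (max (Real.log ((k : ℝ) + 1)) 1) ^ α / 9 * f n ^ 2 := by
        rw [Finset.mul_sum]
    _ ≤ ∑ n ∈ Finset.range N, (auxA α n + auxD α n) * f n ^ 2 := by
        apply Finset.sum_le_sum
        intro n _
        by_cases hfn : f n = 0
        · rw [hfn]; norm_num
        · apply mul_le_mul_of_nonneg_right _ (sq_nonneg _)
          apply hcoef
          by_contra h
          exact hfn (hvan n (by omega))
    _ = ∑ n ∈ Finset.range N, (auxA α n * f n ^ 2 + auxD α (n + 1) * f (n + 1) ^ 2) := hre.symm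
    _ ≤ ∑ n ∈ Finset.range N, ((n : ℝ) + 1) ^ 2 * (max (Real.log ((n : ℝ) + 1)) 1) ^ α *
        (f n - f (n + 1)) ^ 2 := Finset.sum_le_sum fun n _ => hedge n
end
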